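/- Let B ∈ ℝ^{m×r} have full column rank r (r ≤ m), let M, Ω ∈ ℝ^{r×n} with all entries Ω_{tj} > 0, and let σ_p > 0. Set B̃ = I_n ⊗ B ∈ ℝ^{mn×nr} and D = diag(vec(Ω)²) ∈ ℝ^{nr×nr}. Then the limit as λ → 0⁺ of (1/2)[ log( det(λ I_{mn} + σ_p² B̃·B̃ᵀ) / det(λ I_{mn} + B̃·D·B̃ᵀ) ) − mn + tr( (λ I_{mn} + σ_p² B̃·B̃ᵀ)⁻¹ (λ I_{mn} + B̃·D·B̃ᵀ) ) + vec(B·M)ᵀ (λ I_{mn} + σ_p² B̃·B̃ᵀ)⁻¹ vec(B·M) ] exists and equals Σ_{t=1}^{r} Σ_{j=1}^{n} [ log(σ_p / Ω_{tj}) + (Ω_{tj}² + M_{tj}²)/(2σ_p²) − 1/2 ], i.e., the KL divergence between the product Gaussian ∏_{tj} N(M_{tj}, Ω_{tj}²) and the product Gaussian ∏_{tj} N(0, σ_p²). -/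

import Mathlib

open Kronecker Matrix

namespace BlobAux

variable {ι κ : Type*} [Fintype ι] [Fintype κ] [DecidableEq ι] [DecidableEq κ]

lemma det_shift (l : ℝ) (hl : l ≠ 0) (A : Matrix ι κ ℝ) (C : Matrix κ ι ℝ) :
    (l • (1 : Matrix ι ι ℝ) + A * C).det * l ^ (Fintype.card κ)
      = (l • (1 : Matrix κ κ ℝ) + C * A).det * l ^ (Fintype.card ι) := by
  have h1 : l • ((1 : Matrix ι ι ℝ) + A * (l⁻¹ • C)) = l • 1 + A * C := by
    rw [smul_add, Matrix.mul_smul, smul_smul, mul_inv_cancel₀ hl, one_smul]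
  have h2 : l • ((1 : Matrix κ κ ℝ) + (l⁻¹ • C) * A) = l • 1 + C * A := by
    rw [smul_add, Matrix.smul_mul, smul_smul, mul_inv_cancel₀ hl, one_smul]
  rw [← h1, ← h2, Matrix.det_smul, Matrix.det_smul, Matrix.det_one_add_mul_comm]
  ring

lemma push (X : Matrix ι ι ℝ) (Y : Matrix κ κ ℝ) (A : Matrix κ ι ℝ)
    (hX : IsUnit X.det) (hY : IsUnit Y.det) (h : Y * A = A * X) :
    A * X⁻¹ = Y⁻¹ * A := by
  have h2 : Y⁻¹ * (Y * A) * X⁻¹ = Y⁻¹ * (A * X) * X⁻¹ := by rw [h]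
  rw [← Matrix.mul_assoc, Matrix.nonsing_inv_mul _ hY, Matrix.one_mul] at h2
  rw [h2, Matrix.mul_assoc (Y⁻¹) (A * X) X⁻¹, Matrix.mul_assoc A X X⁻¹,
    Matrix.mul_nonsing_inv _ hX, Matrix.mul_one]

lemma isUnit_of_rank_eq_card {A : Matrix κ κ ℝ} (h : A.rank = Fintype.card κ) : IsUnit A := by
  rw [← Matrix.mulVec_surjective_iff_isUnit]
  have htop : LinearMap.range A.mulVecLin = ⊤ := by
    apply Submodule.eq_top_of_finrank_eq
    rw [← Matrix.rank, h, Module.finrank_fintype_fun_eq_card]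
  intro y
  obtain ⟨x, hx⟩ := LinearMap.range_eq_top.mp htop y
  exact ⟨x, hx⟩

omit [DecidableEq ι] [DecidableEq κ] in
lemma psd_mul_transpose (A : Matrix ι κ ℝ) : (A * Aᵀ).PosSemidef := by
  have := Matrix.posSemidef_self_mul_conjTranspose A
  rwa [Matrix.conjTranspose_eq_transpose_of_trivial] at this

omit [DecidableEq ι] [DecidableEq κ] in
lemma psd_transpose_mul (A : Matrix ι κ ℝ) : (Aᵀ * A).PosSemidef := by
  have := Matrix.posSemidef_conjTranspose_mul_self A
  rwa [Matrix.conjTranspose_eq_transpose_of_trivial] at this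

lemma posdef_smul_one_add (l : ℝ) (hl : 0 < l) {A : Matrix ι ι ℝ} (hA : A.PosSemidef) :
    (l • (1 : Matrix ι ι ℝ) + A).PosDef := by
  refine Matrix.PosDef.add_posSemidef ?_ hA
  rw [Matrix.smul_one_eq_diagonal]
  exact Matrix.posDef_diagonal_iff.mpr fun i => hl

end BlobAux

/-- Column-stacking vectorization: `vec X` is indexed by pairs `(j, i)` with `j` a column
index and `i` a row index, and `vec X (j, i) = X i j`. -/
def vec {m n : ℕ} (X : Matrix (Fin m) (Fin n) ℝ) : Fin n × Fin m → ℝ :=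
  fun p => X p.2 p.1

/-- **Theorem 3.2 (Efficient Computation of Full-Weight KL Divergence), regularized form.**
With `B̃ = I_n ⊗ B`, `D = diag(vec(Om)²)`, the λ-regularized Gaussian KL expression between
`q(vec W) = N(vec(W0 + B M), B̃ D B̃ᵀ)` and the prior `P(vec W) = N(vec W0, σp² B̃ B̃ᵀ)`
converges, as `λ → 0⁺`, to the KL divergence between the low-rank product Gaussians
`∏ₜⱼ N(M t j, (Om t j)²)` and `∏ₜⱼ N(0, σp²)`, namely
`∑ₜⱼ [log(σp / Om t j) + ((Om t j)² + (M t j)²)/(2σp²) − 1/2]`. -/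
theorem blob_full_weight_klDiv_tendsto {m n r : ℕ}
    (B : Matrix (Fin m) (Fin r) ℝ) (hrank : B.rank = r)
    (M Om : Matrix (Fin r) (Fin n) ℝ) (hΩ : ∀ t j, 0 < Om t j)
    (σp : ℝ) (hσ : 0 < σp) :
    Filter.Tendsto
      (fun l : ℝ =>
        (1 / 2) *
          (Real.log
              ((l • (1 : Matrix (Fin n × Fin m) (Fin n × Fin m) ℝ)
                  + σp ^ 2 • (((1 : Matrix (Fin n) (Fin n) ℝ) ⊗ₖ B)
                      * ((1 : Matrix (Fin n) (Fin n) ℝ) ⊗ₖ B)ᵀ)).det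
                / (l • (1 : Matrix (Fin n × Fin m) (Fin n × Fin m) ℝ)
                  + ((1 : Matrix (Fin n) (Fin n) ℝ) ⊗ₖ B)
                      * Matrix.diagonal (fun p : Fin n × Fin r => (_root_.vec Om p) ^ 2)
                      * ((1 : Matrix (Fin n) (Fin n) ℝ) ⊗ₖ B)ᵀ).det)
            - (m * n : ℕ)
            + ((l • (1 : Matrix (Fin n × Fin m) (Fin n × Fin m) ℝ)
                  + σp ^ 2 • (((1 : Matrix (Fin n) (Fin n) ℝ) ⊗ₖ B)
                      * ((1 : Matrix (Fin n) (Fin n) ℝ) ⊗ₖ B)ᵀ))⁻¹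
                * (l • (1 : Matrix (Fin n × Fin m) (Fin n × Fin m) ℝ)
                  + ((1 : Matrix (Fin n) (Fin n) ℝ) ⊗ₖ B)
                      * Matrix.diagonal (fun p : Fin n × Fin r => (_root_.vec Om p) ^ 2)
                      * ((1 : Matrix (Fin n) (Fin n) ℝ) ⊗ₖ B)ᵀ)).trace
            + _root_.vec (B * M) ⬝ᵥ
                (l • (1 : Matrix (Fin n × Fin m) (Fin n × Fin m) ℝ)
                  + σp ^ 2 • (((1 : Matrix (Fin n) (Fin n) ℝ) ⊗ₖ B)
                      * ((1 : Matrix (Fin n) (Fin n) ℝ) ⊗ₖ B)ᵀ))⁻¹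
                *ᵥ _root_.vec (B * M)))
      (nhdsWithin 0 (Set.Ioi 0))
      (nhds (∑ t : Fin r, ∑ j : Fin n,
        (Real.log (σp / Om t j) + (Om t j ^ 2 + M t j ^ 2) / (2 * σp ^ 2) - 1 / 2))) := by
  classical
  have hσ2 : (σp : ℝ) ^ 2 ≠ 0 := by positivity
  set Bt : Matrix (Fin n × Fin m) (Fin n × Fin r) ℝ := (1 : Matrix (Fin n) (Fin n) ℝ) ⊗ₖ B with hBt
  set Dm : Matrix (Fin n × Fin r) (Fin n × Fin r) ℝ :=
    Matrix.diagonal (fun p : Fin n × Fin r => (_root_.vec Om p) ^ 2) with hDm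
  set G : Matrix (Fin n × Fin r) (Fin n × Fin r) ℝ := Btᵀ * Bt with hG
  set x : Fin n × Fin r → ℝ := _root_.vec M with hx
  -- kronecker structure of G
  have hGkron : G = (1 : Matrix (Fin n) (Fin n) ℝ) ⊗ₖ (Bᵀ * B) := by
    rw [hG, hBt, ← Matrix.kroneckerMap_transpose, Matrix.transpose_one,
      ← Matrix.mul_kronecker_mul, Matrix.one_mul]
  have hBB : IsUnit (Bᵀ * B) := by
    apply BlobAux.isUnit_of_rank_eq_card
    rw [Matrix.rank_transpose_mul_self, hrank, Fintype.card_fin]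
  have hGdet : IsUnit G.det := by
    rw [hGkron, Matrix.det_kronecker, Matrix.det_one, one_pow, one_mul]
    exact ((Matrix.isUnit_iff_isUnit_det _).mp hBB).pow _
  -- vec (B*M) = Bt *ᵥ vec M
  have hvec : _root_.vec (B * M) = Bt *ᵥ x := by
    funext p
    simp only [_root_.vec, Matrix.mulVec, Matrix.mul_apply, dotProduct, hBt, hx,
      Matrix.kroneckerMap_apply, Fintype.sum_prod_type, Matrix.one_apply]
    rw [Finset.sum_comm]
    simp [Finset.mul_sum, mul_comm]
  -- notation for the small matrices
  set Pm : ℝ → Matrix (Fin n × Fin r) (Fin n × Fin r) ℝ :=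
    fun l => l • 1 + σp ^ 2 • G with hPm
  set Qm : ℝ → Matrix (Fin n × Fin r) (Fin n × Fin r) ℝ :=
    fun l => l • 1 + Dm * G with hQm
  set F : ℝ → ℝ := fun l =>
    (1 / 2) *
      (Real.log ((Pm l).det / (Qm l).det)
        - (m * n : ℕ)
        + ((m * n : ℕ) - σp ^ 2 * ((Pm l)⁻¹ * G).trace + ((Pm l)⁻¹ * (G * Dm)).trace)
        + x ⬝ᵥ ((Pm l)⁻¹ * G) *ᵥ x) with hF
  -- positive semidefiniteness facts
  have hsmG : σp ^ 2 • G = (σp • Bt)ᵀ * (σp • Bt) := by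
    rw [Matrix.transpose_smul, Matrix.smul_mul, Matrix.mul_smul, smul_smul, hG, sq]
  have hsmS : σp ^ 2 • (Bt * Btᵀ) = (σp • Bt) * (σp • Bt)ᵀ := by
    rw [Matrix.transpose_smul, Matrix.smul_mul, Matrix.mul_smul, smul_smul, sq]
  have hDfac : Bt * Dm * Btᵀ
      = (Bt * Matrix.diagonal (fun p => _root_.vec Om p)) * (Bt * Matrix.diagonal (fun p => _root_.vec Om p))ᵀ := by
    rw [Matrix.transpose_mul, Matrix.diagonal_transpose, Matrix.mul_assoc, Matrix.mul_assoc,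
      ← Matrix.mul_assoc (Matrix.diagonal _) (Matrix.diagonal _) Btᵀ,
      Matrix.diagonal_mul_diagonal, hDm]
    have : (fun p : Fin n × Fin r => _root_.vec Om p ^ 2)
        = fun p : Fin n × Fin r => _root_.vec Om p * _root_.vec Om p := funext fun p => pow_two _
    rw [this]
  -- determinant facts at 0
  have hPdet0 : (Pm 0).det ≠ 0 := by
    have : Pm 0 = σp ^ 2 • G := by simp [hPm]
    rw [this, Matrix.det_smul]
    exact mul_ne_zero (pow_ne_zero _ hσ2) hGdet.ne_zero
  have hDmdet : Dm.det = ∏ p : Fin n × Fin r, (_root_.vec Om p) ^ 2 := by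
    rw [hDm, Matrix.det_diagonal]
  have hDmdet_ne : Dm.det ≠ 0 := by
    rw [hDmdet]
    exact Finset.prod_ne_zero_iff.mpr fun p _ => pow_ne_zero _ (hΩ p.2 p.1).ne'
  have hQdet0 : (Qm 0).det ≠ 0 := by
    have : Qm 0 = Dm * G := by simp [hQm]
    rw [this, Matrix.det_mul]
    exact mul_ne_zero hDmdet_ne hGdet.ne_zero
  -- Step 1: pointwise equality on (0, ∞)
  have hkey : ∀ l ∈ Set.Ioi (0 : ℝ), F l =
      (1 / 2) *
        (Real.log ((l • 1 + σp ^ 2 • (Bt * Btᵀ)).det / (l • 1 + Bt * Dm * Btᵀ).det)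
          - (m * n : ℕ)
          + ((l • 1 + σp ^ 2 • (Bt * Btᵀ))⁻¹ * (l • 1 + Bt * Dm * Btᵀ)).trace
          + _root_.vec (B * M) ⬝ᵥ (l • 1 + σp ^ 2 • (Bt * Btᵀ))⁻¹ *ᵥ _root_.vec (B * M)) := by
    intro l hl
    rw [Set.mem_Ioi] at hl
    set Sm : Matrix (Fin n × Fin m) (Fin n × Fin m) ℝ := l • 1 + σp ^ 2 • (Bt * Btᵀ) with hSm
    set Tm : Matrix (Fin n × Fin m) (Fin n × Fin m) ℝ := l • 1 + Bt * Dm * Btᵀ with hTm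
    have hSpd : Sm.PosDef := by
      rw [hSm, hsmS]; exact BlobAux.posdef_smul_one_add l hl (BlobAux.psd_mul_transpose _)
    have hTpd : Tm.PosDef := by
      rw [hTm, hDfac]; exact BlobAux.posdef_smul_one_add l hl (BlobAux.psd_mul_transpose _)
    have hPpd : (Pm l).PosDef := by
      rw [hPm]; dsimp only
      rw [hsmG]; exact BlobAux.posdef_smul_one_add l hl (BlobAux.psd_transpose_mul _)
    have hSdet : IsUnit Sm.det := hSpd.det_pos.ne'.isUnit
    have hPdet : IsUnit (Pm l).det := hPpd.det_pos.ne'.isUnit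
    -- push-through identity
    have hcomm : Pm l * Btᵀ = Btᵀ * Sm := by
      rw [hPm, hSm]; dsimp only
      rw [Matrix.add_mul, Matrix.mul_add, Matrix.smul_mul, Matrix.one_mul,
        Matrix.mul_smul, Matrix.mul_one, Matrix.smul_mul, Matrix.mul_smul, hG,
        Matrix.mul_assoc]
    have hpush : Btᵀ * Sm⁻¹ = (Pm l)⁻¹ * Btᵀ :=
      BlobAux.push Sm (Pm l) Btᵀ hSdet hPdet hcomm
    -- determinant identity
    have hdS : Sm.det * l ^ (Fintype.card (Fin n × Fin r))
        = (Pm l).det * l ^ (Fintype.card (Fin n × Fin m)) := by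
      have := BlobAux.det_shift l hl.ne' Bt (σp ^ 2 • Btᵀ)
      rw [Matrix.mul_smul, Matrix.smul_mul, ← hG, ← hSm] at this
      rw [this, hPm]
    have hdT : Tm.det * l ^ (Fintype.card (Fin n × Fin r))
        = (Qm l).det * l ^ (Fintype.card (Fin n × Fin m)) := by
      have := BlobAux.det_shift l hl.ne' Bt (Dm * Btᵀ)
      rw [← Matrix.mul_assoc, Matrix.mul_assoc Dm, ← hG, ← hTm] at this
      rw [this, hQm]
    have hlκ : l ^ (Fintype.card (Fin n × Fin r)) ≠ 0 := pow_ne_zero _ hl.ne'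
    have hlι : l ^ (Fintype.card (Fin n × Fin m)) ≠ 0 := pow_ne_zero _ hl.ne'
    have hQdet : (Qm l).det ≠ 0 := by
      intro h0
      rw [h0, zero_mul] at hdT
      exact (mul_ne_zero hTpd.det_pos.ne' hlκ) hdT
    have hratio : (Pm l).det / (Qm l).det = Sm.det / Tm.det := by
      have hcross : Sm.det * (Qm l).det * (l ^ (Fintype.card (Fin n × Fin r)) * l ^ (Fintype.card (Fin n × Fin m)))
          = (Pm l).det * Tm.det * (l ^ (Fintype.card (Fin n × Fin r)) * l ^ (Fintype.card (Fin n × Fin m))) := by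
        calc Sm.det * (Qm l).det * (l ^ (Fintype.card (Fin n × Fin r)) * l ^ (Fintype.card (Fin n × Fin m)))
            = (Sm.det * l ^ (Fintype.card (Fin n × Fin r))) * ((Qm l).det * l ^ (Fintype.card (Fin n × Fin m))) := by ring
          _ = ((Pm l).det * l ^ (Fintype.card (Fin n × Fin m))) * (Tm.det * l ^ (Fintype.card (Fin n × Fin r))) := by
              rw [hdS, ← hdT]
          _ = (Pm l).det * Tm.det * (l ^ (Fintype.card (Fin n × Fin r)) * l ^ (Fintype.card (Fin n × Fin m))) := by ring
      have hSQ := mul_right_cancel₀ (mul_ne_zero hlκ hlι) hcross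
      rw [div_eq_div_iff hQdet hTpd.det_pos.ne']
      linarith [hSQ]
    -- trace identity
    have htr : (Sm⁻¹ * Tm).trace
        = (m * n : ℕ) - σp ^ 2 * ((Pm l)⁻¹ * G).trace + ((Pm l)⁻¹ * (G * Dm)).trace := by
      have hinvS : Sm⁻¹ * Sm = 1 := Matrix.nonsing_inv_mul _ hSdet
      have hsplit : l • Sm⁻¹ + σp ^ 2 • (Sm⁻¹ * (Bt * Btᵀ)) = 1 := by
        rw [← hinvS]
        nth_rewrite 3 [hSm]
        rw [Matrix.mul_add, Matrix.mul_smul, Matrix.mul_one, Matrix.mul_smul]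
      have htr1 : (Sm⁻¹ * (Bt * Btᵀ)).trace = ((Pm l)⁻¹ * G).trace := by
        rw [← Matrix.mul_assoc, Matrix.trace_mul_comm, ← Matrix.mul_assoc, hpush,
          Matrix.mul_assoc, ← hG]
      have htr2 : (Sm⁻¹ * (Bt * Dm * Btᵀ)).trace = ((Pm l)⁻¹ * (G * Dm)).trace := by
        have e1 : Sm⁻¹ * (Bt * Dm * Btᵀ) = (Sm⁻¹ * (Bt * Dm)) * Btᵀ := by
          rw [← Matrix.mul_assoc]
        have e2 : Btᵀ * (Sm⁻¹ * (Bt * Dm)) = (Pm l)⁻¹ * (G * Dm) := by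
          rw [← Matrix.mul_assoc, hpush, Matrix.mul_assoc, ← Matrix.mul_assoc Btᵀ Bt Dm, ← hG]
        rw [e1, Matrix.trace_mul_comm, e2]
      have hTsplit : Sm⁻¹ * Tm = l • Sm⁻¹ + Sm⁻¹ * (Bt * Dm * Btᵀ) := by
        rw [hTm, Matrix.mul_add, Matrix.mul_smul, Matrix.mul_one]
      rw [hTsplit, Matrix.trace_add, htr2]
      have : (l • Sm⁻¹).trace = (1 - σp ^ 2 • (Sm⁻¹ * (Bt * Btᵀ)) :
          Matrix (Fin n × Fin m) (Fin n × Fin m) ℝ).trace := by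
        rw [eq_sub_iff_add_eq.mpr hsplit]
      rw [this, Matrix.trace_sub, Matrix.trace_one, Matrix.trace_smul, htr1]
      simp [Fintype.card_prod, smul_eq_mul]
      ring
    -- quadratic form identity
    have hquad : _root_.vec (B * M) ⬝ᵥ Sm⁻¹ *ᵥ _root_.vec (B * M) = x ⬝ᵥ ((Pm l)⁻¹ * G) *ᵥ x := by
      rw [hvec]
      have e1 : Sm⁻¹ *ᵥ Bt *ᵥ x = (Sm⁻¹ * Bt) *ᵥ x := Matrix.mulVec_mulVec x Sm⁻¹ Bt
      have e2 : Btᵀ * (Sm⁻¹ * Bt) = (Pm l)⁻¹ * G := by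
        rw [← Matrix.mul_assoc, hpush, Matrix.mul_assoc, ← hG]
      rw [e1, ← Matrix.vecMul_transpose, Matrix.dotProduct_mulVec, Matrix.vecMul_vecMul, e2,
        ← Matrix.dotProduct_mulVec]
    rw [hF]; dsimp only
    rw [hratio, htr, hquad]
  -- Step 2: continuity of F at 0
  have hcP : Continuous Pm := by
    rw [hPm]; exact (continuous_id.smul continuous_const).add continuous_const
  have hcQ : Continuous Qm := by
    rw [hQm]; exact (continuous_id.smul continuous_const).add continuous_const
  have hPi : ContinuousAt (fun l => (Pm l)⁻¹) 0 := by
    have h0 : ContinuousAt Inv.inv (Pm 0) := by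
      apply continuousAt_matrix_inv
      rw [Ring.inverse_eq_inv']
      exact continuousAt_inv₀ hPdet0
    exact h0.comp hcP.continuousAt
  have hFc : ContinuousAt F 0 := by
    rw [hF]
    have hlog : ContinuousAt (fun l => Real.log ((Pm l).det / (Qm l).det)) 0 := by
      have hdiv : ContinuousAt (fun l => (Pm l).det / (Qm l).det) 0 :=
        (hcP.matrix_det.continuousAt).div (hcQ.matrix_det.continuousAt) hQdet0
      exact hdiv.log (div_ne_zero hPdet0 hQdet0)
    have ht1 : ContinuousAt (fun l => ((Pm l)⁻¹ * G).trace) 0 :=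
      ((continuous_id.matrix_mul continuous_const).matrix_trace).continuousAt.comp hPi
    have ht2 : ContinuousAt (fun l => ((Pm l)⁻¹ * (G * Dm)).trace) 0 :=
      ((continuous_id.matrix_mul continuous_const).matrix_trace).continuousAt.comp hPi
    have hq : ContinuousAt (fun l => x ⬝ᵥ ((Pm l)⁻¹ * G) *ᵥ x) 0 :=
      (continuous_const.dotProduct
        ((continuous_id.matrix_mul continuous_const).matrix_mulVec continuous_const)).continuousAt.comp hPi
    exact continuousAt_const.mul ((((hlog.sub continuousAt_const).add
      ((continuousAt_const.sub (continuousAt_const.mul ht1)).add ht2)).add hq))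
  -- Step 3: value of F at 0
  have hval : F 0 = ∑ t : Fin r, ∑ j : Fin n,
      (Real.log (σp / Om t j) + (Om t j ^ 2 + M t j ^ 2) / (2 * σp ^ 2) - 1 / 2) := by
    have hP0 : Pm 0 = σp ^ 2 • G := by simp [hPm]
    have hQ0 : Qm 0 = Dm * G := by simp [hQm]
    have hinv : (σp ^ 2 • G)⁻¹ = (σp ^ 2)⁻¹ • G⁻¹ := by
      apply Matrix.inv_eq_right_inv
      rw [Matrix.smul_mul, Matrix.mul_smul, smul_smul, Matrix.mul_nonsing_inv _ hGdet,
        mul_inv_cancel₀ hσ2, one_smul]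
    have hPG : (Pm 0)⁻¹ * G = (σp ^ 2)⁻¹ • (1 : Matrix (Fin n × Fin r) (Fin n × Fin r) ℝ) := by
      rw [hP0, hinv, Matrix.smul_mul, Matrix.nonsing_inv_mul _ hGdet]
    have hcard : (Fintype.card (Fin n × Fin r) : ℝ) = (n : ℝ) * r := by
      simp [Fintype.card_prod]
    have htrace1 : ((Pm 0)⁻¹ * G).trace = (σp ^ 2)⁻¹ * ((n : ℝ) * r) := by
      rw [hPG, Matrix.trace_smul, Matrix.trace_one, smul_eq_mul, hcard]
    have htrace2 : ((Pm 0)⁻¹ * (G * Dm)).trace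
        = (σp ^ 2)⁻¹ * ∑ p : Fin n × Fin r, Om p.2 p.1 ^ 2 := by
      rw [← Matrix.mul_assoc, hPG, Matrix.smul_mul, Matrix.one_mul, Matrix.trace_smul,
        smul_eq_mul, hDm, Matrix.trace_diagonal]
      simp [_root_.vec]
    have hquad0 : x ⬝ᵥ ((Pm 0)⁻¹ * G) *ᵥ x
        = (σp ^ 2)⁻¹ * ∑ p : Fin n × Fin r, M p.2 p.1 ^ 2 := by
      rw [hPG, Matrix.smul_mulVec, Matrix.one_mulVec, dotProduct_smul, smul_eq_mul,
        hx]
      congr 1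
      simp [dotProduct, _root_.vec, pow_two]
    have hprodne : (∏ p : Fin n × Fin r, _root_.vec Om p ^ 2) ≠ 0 :=
      Finset.prod_ne_zero_iff.mpr fun p _ => pow_ne_zero _ (hΩ p.2 p.1).ne'
    have hlogv : Real.log ((Pm 0).det / (Qm 0).det)
        = ((n : ℝ) * r) * (2 * Real.log σp)
          - 2 * ∑ p : Fin n × Fin r, Real.log (Om p.2 p.1) := by
      rw [hP0, hQ0, Matrix.det_smul, Matrix.det_mul, hDmdet,
        mul_div_mul_right _ _ hGdet.ne_zero,
        Real.log_div (pow_ne_zero _ hσ2) hprodne, Real.log_pow,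
        Real.log_prod (fun p _ => pow_ne_zero 2 (hΩ p.2 p.1).ne'), Real.log_pow]
      simp_rw [_root_.vec, Real.log_pow]
      push_cast [Fintype.card_prod]
      simp only [Fintype.card_fin]
      rw [Finset.mul_sum]
    have hswap : ∑ t : Fin r, ∑ j : Fin n,
          (Real.log (σp / Om t j) + (Om t j ^ 2 + M t j ^ 2) / (2 * σp ^ 2) - 1 / 2)
        = ∑ p : Fin n × Fin r,
          (Real.log (σp / Om p.2 p.1) + (Om p.2 p.1 ^ 2 + M p.2 p.1 ^ 2) / (2 * σp ^ 2) - 1 / 2) := by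
      rw [Fintype.sum_prod_type]
      exact Finset.sum_comm
    have hterm : ∀ p : Fin n × Fin r,
        (Real.log (σp / Om p.2 p.1) + (Om p.2 p.1 ^ 2 + M p.2 p.1 ^ 2) / (2 * σp ^ 2) - 1 / 2)
        = Real.log σp - Real.log (Om p.2 p.1)
          + (Om p.2 p.1 ^ 2 + M p.2 p.1 ^ 2) / (2 * σp ^ 2) - 1 / 2 := fun p => by
      rw [Real.log_div hσ.ne' (hΩ p.2 p.1).ne']
    have hexpand : ∑ p : Fin n × Fin r,
          (Real.log σp - Real.log (Om p.2 p.1)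
            + (Om p.2 p.1 ^ 2 + M p.2 p.1 ^ 2) / (2 * σp ^ 2) - 1 / 2)
        = ((n : ℝ) * r) * Real.log σp - ∑ p : Fin n × Fin r, Real.log (Om p.2 p.1)
          + (∑ p : Fin n × Fin r, Om p.2 p.1 ^ 2 + ∑ p : Fin n × Fin r, M p.2 p.1 ^ 2)
              / (2 * σp ^ 2)
          - ((n : ℝ) * r) / 2 := by
      rw [Finset.sum_sub_distrib, Finset.sum_add_distrib, Finset.sum_sub_distrib,
        Finset.sum_const, Finset.sum_const, Finset.card_univ, ← Finset.sum_add_distrib,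
        ← Finset.sum_div]
      simp [Fintype.card_prod, nsmul_eq_mul]
      ring
    rw [hF]; dsimp only
    rw [hlogv, htrace1, htrace2, hquad0, hswap]
    simp_rw [hterm]
    rw [hexpand]
    have hc2 : ((m * n : ℕ) : ℝ) = (m : ℝ) * n := by push_cast; ring
    rw [hc2]
    field_simp
    ring
  -- assemble
  have htends : Filter.Tendsto F (nhdsWithin 0 (Set.Ioi 0)) (nhds (F 0)) :=
    hFc.tendsto.mono_left nhdsWithin_le_nhds
  rw [hval] at htends
  refine Filter.Tendsto.congr' ?_ htends
  filter_upwards [self_mem_nhdsWithin] with l hl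
  exact hkey l hl
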